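/- If S and T are bounded operators on a complex Hilbert space and at least one of S, T is accretive-dissipative, then ω(ST) ≤ 2√2 · ω(S) ω(T). -/

import Mathlib

open scoped InnerProductSpace
open ContinuousLinearMap

variable {H : Type*} [NormedAddCommGroup H] [InnerProductSpace ℂ H] [CompleteSpace H]

/-- The numerical radius of a bounded operator. -/
noncomputable def numRadius (T : H →L[ℂ] H) : ℝ :=
  ⨆ x : {x : H // ‖x‖ = 1}, ‖⟪T x.1, x.1⟫_ℂ‖

/-- The absolute value |A| = (A*A)^(1/2). -/
noncomputable def opAbs (A : H →L[ℂ] H) : H →L[ℂ] H := CFC.sqrt (adjoint A * A)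

/-- Real part of the Cartesian decomposition. -/
noncomputable def reP (T : H →L[ℂ] H) : H →L[ℂ] H := (2:ℂ)⁻¹ • (T + adjoint T)

/-- Imaginary part of the Cartesian decomposition. -/
noncomputable def imP (T : H →L[ℂ] H) : H →L[ℂ] H := (2*Complex.I:ℂ)⁻¹ • (T - adjoint T)

set_option linter.unusedSectionVars false

lemma nr_bdd (T : H →L[ℂ] H) :
    BddAbove (Set.range fun x : {x : H // ‖x‖ = 1} => ‖⟪T x.1, x.1⟫_ℂ‖) := by
  refine ⟨‖T‖, ?_⟩
  rintro _ ⟨x, rfl⟩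
  calc ‖⟪T x.1, x.1⟫_ℂ‖ = ‖⟪T x.1, x.1⟫_ℂ‖ := rfl
    _ ≤ ‖T x.1‖ * ‖x.1‖ := norm_inner_le_norm _ _
    _ ≤ (‖T‖ * ‖x.1‖) * ‖x.1‖ := by gcongr; exact T.le_opNorm _
    _ = ‖T‖ := by rw [x.2]; ring

lemma nr_nonneg (T : H →L[ℂ] H) : 0 ≤ numRadius T :=
  Real.iSup_nonneg fun x => norm_nonneg _

lemma abs_inner_le_nr (T : H →L[ℂ] H) {x : H} (hx : ‖x‖ = 1) :
    ‖⟪T x, x⟫_ℂ‖ ≤ numRadius T :=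
  le_ciSup (nr_bdd T) ⟨x, hx⟩

lemma nr_le_norm (T : H →L[ℂ] H) : numRadius T ≤ ‖T‖ := by
  by_cases h : Nonempty {x : H // ‖x‖ = 1}
  · refine ciSup_le fun x => ?_
    calc ‖⟪T x.1, x.1⟫_ℂ‖ = ‖⟪T x.1, x.1⟫_ℂ‖ := rfl
      _ ≤ ‖T x.1‖ * ‖x.1‖ := norm_inner_le_norm _ _
      _ ≤ (‖T‖ * ‖x.1‖) * ‖x.1‖ := by gcongr; exact T.le_opNorm _
      _ = ‖T‖ := by rw [x.2]; ring
  · have : IsEmpty {x : H // ‖x‖ = 1} := not_nonempty_iff.mp h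
    rw [numRadius, Real.iSup_of_isEmpty]
    exact norm_nonneg T

lemma abs_inner_le_nr' (T : H →L[ℂ] H) (x : H) :
    ‖⟪T x, x⟫_ℂ‖ ≤ numRadius T * ‖x‖ ^ 2 := by
  rcases eq_or_ne x 0 with rfl | hx
  · simp
  · have hr : (0:ℝ) < ‖x‖ := norm_pos_iff.mpr hx
    set u : H := ((‖x‖:ℂ))⁻¹ • x with hu
    have hun : ‖u‖ = 1 := by
      rw [hu, norm_smul]
      simp [norm_inv, hr.ne']
    have h1 := abs_inner_le_nr T hun
    have h2 : ⟪T u, u⟫_ℂ = ((‖x‖:ℂ))⁻¹ * (((‖x‖:ℂ))⁻¹ * ⟪T x, x⟫_ℂ) := by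
      rw [hu, map_smul, inner_smul_left, inner_smul_right]
      simp [Complex.conj_ofReal]
    rw [h2] at h1
    rw [norm_mul, norm_mul] at h1
    have habs : ‖((‖x‖:ℂ))⁻¹‖ = (‖x‖)⁻¹ := by
      simp [norm_inv, abs_of_nonneg hr.le]
    rw [habs] at h1
    have := mul_le_mul_of_nonneg_left h1 (le_of_lt (mul_pos hr hr))
    calc ‖⟪T x, x⟫_ℂ‖
        = (‖x‖ * ‖x‖) * ((‖x‖)⁻¹ * ((‖x‖)⁻¹ * ‖⟪T x, x⟫_ℂ‖)) := by
          field_simp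
      _ ≤ (‖x‖ * ‖x‖) * numRadius T := this
      _ = numRadius T * ‖x‖ ^ 2 := by ring

-- helper: operator norm from sesquilinear bound on unit vectors
lemma sesq_bound {c : ℝ} (hc : 0 ≤ c) (A : H →L[ℂ] H)
    (h : ∀ x y : H, ‖x‖ = 1 → ‖y‖ = 1 → ‖⟪A x, y⟫_ℂ‖ ≤ c) :
    ‖A‖ ≤ c := by
  refine opNorm_le_bound _ hc fun x => ?_
  rcases eq_or_ne x 0 with rfl | hx
  · simp
  rcases eq_or_ne (A x) 0 with hAx | hAx
  · rw [hAx]; simp; positivity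
  have hrx : (0:ℝ) < ‖x‖ := norm_pos_iff.mpr hx
  have hrA : (0:ℝ) < ‖A x‖ := norm_pos_iff.mpr hAx
  set u : H := ((‖x‖:ℂ))⁻¹ • x with hu
  set v : H := ((‖A x‖:ℂ))⁻¹ • (A x) with hv
  have hun : ‖u‖ = 1 := by rw [hu, norm_smul]; simp [hrx.ne']
  have hvn : ‖v‖ = 1 := by rw [hv, norm_smul]; simp [hrA.ne']
  have key := h u v hun hvn
  have hinner : ⟪A u, v⟫_ℂ = ((‖x‖:ℂ))⁻¹ * (((‖A x‖:ℂ))⁻¹ * ⟪A x, A x⟫_ℂ) := by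
    rw [hu, hv, map_smul, inner_smul_left, inner_smul_right]
    simp [Complex.conj_ofReal]
  have hAA : ⟪A x, A x⟫_ℂ = ((‖A x‖^2 : ℝ) : ℂ) := by
    rw [inner_self_eq_norm_sq_to_K]; norm_num
  rw [hinner, hAA, norm_mul, norm_mul] at key
  have h1 : ‖((‖x‖:ℂ))⁻¹‖ = (‖x‖)⁻¹ := by
    simp [norm_inv, abs_of_nonneg hrx.le]
  have h2 : ‖((‖A x‖:ℂ))⁻¹‖ = (‖A x‖)⁻¹ := by
    simp [norm_inv, abs_of_nonneg hrA.le]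
  have h3 : ‖((‖A x‖^2 : ℝ) : ℂ)‖ = ‖A x‖^2 := by
    rw [Complex.norm_real, Real.norm_eq_abs, abs_of_nonneg (sq_nonneg _)]
  rw [h1, h2, h3] at key
  have : (‖x‖)⁻¹ * ((‖A x‖)⁻¹ * ‖A x‖^2) = ‖A x‖ / ‖x‖ := by
    field_simp
  rw [this] at key
  calc ‖A x‖ = (‖A x‖ / ‖x‖) * ‖x‖ := by field_simp
    _ ≤ c * ‖x‖ := by gcongr

lemma polar_pair (T : H →L[ℂ] H) (x y : H) (hx : ‖x‖ = 1) (hy : ‖y‖ = 1) :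
    ‖⟪T x, y⟫_ℂ + ⟪T y, x⟫_ℂ‖ ≤ 2 * numRadius T := by
  have expand : ⟪T (x+y), x+y⟫_ℂ - ⟪T (x-y), x-y⟫_ℂ
      = 2 * (⟪T x, y⟫_ℂ + ⟪T y, x⟫_ℂ) := by
    simp only [map_add, map_sub, inner_add_left, inner_add_right,
      inner_sub_left, inner_sub_right]
    ring
  have h1 := abs_inner_le_nr' T (x + y)
  have h2 := abs_inner_le_nr' T (x - y)
  have par : ‖x + y‖ ^ 2 + ‖x - y‖ ^ 2 = 4 := by
    have := parallelogram_law_with_norm ℂ x y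
    rw [hx, hy] at this
    nlinarith [this]
  have habs : ‖2 * (⟪T x, y⟫_ℂ + ⟪T y, x⟫_ℂ)‖
      ≤ ‖⟪T (x+y), x+y⟫_ℂ‖ + ‖⟪T (x-y), x-y⟫_ℂ‖ := by
    rw [← expand]
    exact norm_sub_le _ _
  rw [norm_mul] at habs
  have h2abs : ‖(2:ℂ)‖ = 2 := by norm_num
  rw [h2abs] at habs
  have hnr := nr_nonneg T
  nlinarith [habs, h1, h2, par]

lemma abs_inner_unit (T : H →L[ℂ] H) (x y : H) (hx : ‖x‖ = 1) (hy : ‖y‖ = 1) :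
    ‖⟪T x, y⟫_ℂ‖ ≤ 2 * numRadius T := by
  set a := ⟪T x, y⟫_ℂ
  set b := ⟪T y, x⟫_ℂ
  have h1 : ‖a + b‖ ≤ 2 * numRadius T := polar_pair T x y hx hy
  have hix : ‖(Complex.I • x : H)‖ = 1 := by rw [norm_smul]; simp [hx]
  have h2' := polar_pair T (Complex.I • x) y hix hy
  have hc : ⟪T (Complex.I • x), y⟫_ℂ + ⟪T y, Complex.I • x⟫_ℂ
      = Complex.I * (b - a) := by
    rw [map_smul, inner_smul_left, inner_smul_right]
    simp [a, b, Complex.conj_I]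
    ring
  rw [hc, norm_mul, Complex.norm_I, one_mul] at h2'
  have hmain : ‖2 * a‖ ≤ ‖a + b‖ + ‖b - a‖ := by
    have : 2 * a = (a + b) - (b - a) := by ring
    rw [this]
    exact norm_sub_le _ _
  rw [norm_mul] at hmain
  have h2abs : ‖(2:ℂ)‖ = 2 := by norm_num
  rw [h2abs] at hmain
  linarith

lemma norm_le_two_nr (T : H →L[ℂ] H) : ‖T‖ ≤ 2 * numRadius T :=
  sesq_bound (by have := nr_nonneg T; linarith) T (abs_inner_unit T)

lemma reP_add_I_imP (S : H →L[ℂ] H) : reP S + Complex.I • imP S = S := by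
  rw [reP, imP, smul_smul]
  have hI : Complex.I * (2*Complex.I)⁻¹ = (2:ℂ)⁻¹ := by
    field_simp
  rw [hI]
  module

lemma sa_inner_real {A : H →L[ℂ] H} (hA : IsSelfAdjoint A) (x : H) :
    ⟪A x, x⟫_ℂ = ((⟪A x, x⟫_ℂ).re : ℂ) := by
  refine (Complex.conj_eq_iff_re.mp ?_).symm
  rw [inner_conj_symm]
  conv_rhs => rw [← hA.adjoint_eq]
  rw [adjoint_inner_left]

set_option synthInstance.maxHeartbeats 400000 in
lemma pos_cs {A : H →L[ℂ] H} (hA : A.IsPositive) (x y : H) :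
    ‖⟪A x, y⟫_ℂ‖ ≤ Real.sqrt ((⟪A x, x⟫_ℂ).re * (⟪A y, y⟫_ℂ).re) := by
  have hA0 : (0 : H →L[ℂ] H) ≤ A := (nonneg_iff_isPositive A).mpr hA
  set R := CFC.sqrt A with hR
  have hRR : R * R = A := CFC.sqrt_mul_sqrt_self A hA0
  have hR0 : (0 : H →L[ℂ] H) ≤ R := CFC.sqrt_nonneg A
  have hRsa : IsSelfAdjoint R := IsSelfAdjoint.of_nonneg hR0
  have hadj : adjoint R = R := isSelfAdjoint_iff'.mp hRsa
  have hAx : ∀ z w : H, ⟪A z, w⟫_ℂ = ⟪R z, R w⟫_ℂ := by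
    intro z w
    rw [← hRR]
    show ⟪R (R z), w⟫_ℂ = ⟪R z, R w⟫_ℂ
    have h := adjoint_inner_left R w (R z)
    rw [hadj] at h
    exact h
  have hnx : ‖R x‖ = Real.sqrt ((⟪A x, x⟫_ℂ).re) := by
    rw [norm_eq_sqrt_re_inner (𝕜 := ℂ), hAx x x]; rfl
  have hny : ‖R y‖ = Real.sqrt ((⟪A y, y⟫_ℂ).re) := by
    rw [norm_eq_sqrt_re_inner (𝕜 := ℂ), hAx y y]; rfl
  calc ‖⟪A x, y⟫_ℂ‖ = ‖⟪R x, R y⟫_ℂ‖ := by rw [hAx x y]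
    _ ≤ ‖R x‖ * ‖R y‖ := norm_inner_le_norm _ _
    _ = Real.sqrt ((⟪A x, x⟫_ℂ).re) * Real.sqrt ((⟪A y, y⟫_ℂ).re) := by rw [hnx, hny]
    _ = Real.sqrt ((⟪A x, x⟫_ℂ).re * (⟪A y, y⟫_ℂ).re) := (Real.sqrt_mul
        (by have := hA.re_inner_nonneg_left x; simpa using this) _).symm

lemma sqrt_add_sqrt {p q r s : ℝ} (hp : 0 ≤ p) (hq : 0 ≤ q) (hr : 0 ≤ r) (hs : 0 ≤ s) :
    Real.sqrt (p*q) + Real.sqrt (r*s) ≤ Real.sqrt ((p+r)*(q+s)) := by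
  have h1 : (Real.sqrt (p*q))^2 = p*q := Real.sq_sqrt (by positivity)
  have h2 : (Real.sqrt (r*s))^2 = r*s := Real.sq_sqrt (by positivity)
  have key : 2 * (Real.sqrt (p*q) * Real.sqrt (r*s)) ≤ p*s + r*q := by
    nlinarith [Real.sqrt_nonneg (p*q), Real.sqrt_nonneg (r*s), sq_nonneg (p*s - r*q),
      mul_nonneg hp hs, mul_nonneg hr hq]
  have lhs_nonneg : 0 ≤ Real.sqrt (p*q) + Real.sqrt (r*s) := by positivity
  have hsq : (Real.sqrt (p*q) + Real.sqrt (r*s))^2 ≤ (p+r)*(q+s) := by nlinarith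
  calc Real.sqrt (p*q) + Real.sqrt (r*s)
      = Real.sqrt ((Real.sqrt (p*q) + Real.sqrt (r*s))^2) := (Real.sqrt_sq lhs_nonneg).symm
    _ ≤ Real.sqrt ((p+r)*(q+s)) := Real.sqrt_le_sqrt hsq

lemma accdiss_norm_le {S : H →L[ℂ] H} (hA : (reP S).IsPositive) (hB : (imP S).IsPositive) :
    ‖S‖ ≤ Real.sqrt 2 * numRadius S := by
  set A := reP S with hAdef
  set B := imP S with hBdef
  have hM : 0 ≤ Real.sqrt 2 * numRadius S := mul_nonneg (Real.sqrt_nonneg 2) (nr_nonneg S)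
  have hdecomp : A + Complex.I • B = S := reP_add_I_imP S
  have happ : ∀ z : H, S z = A z + Complex.I • B z := by
    intro z
    conv_lhs => rw [← hdecomp]
    rfl
  have sumle : ∀ x : H, ‖x‖ = 1 →
      (⟪A x, x⟫_ℂ).re + (⟪B x, x⟫_ℂ).re ≤ Real.sqrt 2 * numRadius S := by
    intro x hx
    set a := (⟪A x, x⟫_ℂ).re with hadef
    set b := (⟪B x, x⟫_ℂ).re with hbdef
    have ha : 0 ≤ a := by have := hA.re_inner_nonneg_left x; simpa using this
    have hb : 0 ≤ b := by have := hB.re_inner_nonneg_left x; simpa using this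
    have hz : ⟪S x, x⟫_ℂ = (a : ℂ) - Complex.I * (b : ℂ) := by
      rw [happ x, inner_add_left, inner_smul_left,
        sa_inner_real hA.isSelfAdjoint, sa_inner_real hB.isSelfAdjoint]
      simp [Complex.conj_I]
      ring
    have habs : ‖⟪S x, x⟫_ℂ‖ = Real.sqrt (a^2 + b^2) := by
      rw [hz, Complex.norm_def, Complex.normSq_apply]
      norm_num
      ring_nf
    have h2 : a + b ≤ Real.sqrt 2 * Real.sqrt (a^2 + b^2) := by
      rw [← Real.sqrt_mul (by norm_num)]
      have h3 : a + b = Real.sqrt ((a+b)^2) := (Real.sqrt_sq (by linarith)).symm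
      rw [h3]
      apply Real.sqrt_le_sqrt
      nlinarith [sq_nonneg (a - b)]
    calc a + b ≤ Real.sqrt 2 * Real.sqrt (a^2 + b^2) := h2
      _ = Real.sqrt 2 * ‖⟪S x, x⟫_ℂ‖ := by rw [habs]
      _ ≤ Real.sqrt 2 * numRadius S := by
          have := abs_inner_le_nr S hx
          gcongr
  refine sesq_bound hM S ?_
  intro x y hx hy
  have hax : 0 ≤ (⟪A x, x⟫_ℂ).re := by have := hA.re_inner_nonneg_left x; simpa using this
  have hbx : 0 ≤ (⟪B x, x⟫_ℂ).re := by have := hB.re_inner_nonneg_left x; simpa using this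
  have hay : 0 ≤ (⟪A y, y⟫_ℂ).re := by have := hA.re_inner_nonneg_left y; simpa using this
  have hby : 0 ≤ (⟪B y, y⟫_ℂ).re := by have := hB.re_inner_nonneg_left y; simpa using this
  have hSxy : ⟪S x, y⟫_ℂ = ⟪A x, y⟫_ℂ + (starRingEnd ℂ) Complex.I * ⟪B x, y⟫_ℂ := by
    rw [happ x, inner_add_left, inner_smul_left]
  calc ‖⟪S x, y⟫_ℂ‖
      ≤ ‖⟪A x, y⟫_ℂ‖ + ‖(starRingEnd ℂ) Complex.I * ⟪B x, y⟫_ℂ‖ := by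
        rw [hSxy]; exact norm_add_le _ _
    _ = ‖⟪A x, y⟫_ℂ‖ + ‖⟪B x, y⟫_ℂ‖ := by
        rw [norm_mul]; simp
    _ ≤ Real.sqrt ((⟪A x, x⟫_ℂ).re * (⟪A y, y⟫_ℂ).re)
        + Real.sqrt ((⟪B x, x⟫_ℂ).re * (⟪B y, y⟫_ℂ).re) :=
        add_le_add (pos_cs hA x y) (pos_cs hB x y)
    _ ≤ Real.sqrt (((⟪A x, x⟫_ℂ).re + (⟪B x, x⟫_ℂ).re)
        * ((⟪A y, y⟫_ℂ).re + (⟪B y, y⟫_ℂ).re)) := sqrt_add_sqrt hax hay hbx hby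
    _ ≤ Real.sqrt ((Real.sqrt 2 * numRadius S) * (Real.sqrt 2 * numRadius S)) := by
        apply Real.sqrt_le_sqrt
        exact mul_le_mul (sumle x hx) (sumle y hy) (by linarith) hM
    _ = Real.sqrt 2 * numRadius S := Real.sqrt_mul_self hM

theorem stmt_12 (S T : H →L[ℂ] H)
    (h : ((reP S).IsPositive ∧ (imP S).IsPositive) ∨ ((reP T).IsPositive ∧ (imP T).IsPositive)) :
    numRadius (S * T) ≤ 2 * Real.sqrt 2 * numRadius S * numRadius T := by
  have hST : numRadius (S * T) ≤ ‖S‖ * ‖T‖ := (nr_le_norm _).trans (norm_mul_le S T)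
  have hS0 := nr_nonneg S
  have hT0 := nr_nonneg T
  rcases h with ⟨hA, hB⟩ | ⟨hA, hB⟩
  · calc numRadius (S * T) ≤ ‖S‖ * ‖T‖ := hST
      _ ≤ (Real.sqrt 2 * numRadius S) * (2 * numRadius T) :=
          mul_le_mul (accdiss_norm_le hA hB) (norm_le_two_nr T) (norm_nonneg T) (by positivity)
      _ = 2 * Real.sqrt 2 * numRadius S * numRadius T := by ring
  · calc numRadius (S * T) ≤ ‖S‖ * ‖T‖ := hST
      _ ≤ (2 * numRadius S) * (Real.sqrt 2 * numRadius T) :=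
          mul_le_mul (norm_le_two_nr S) (accdiss_norm_le hA hB) (norm_nonneg T) (by positivity)
      _ = 2 * Real.sqrt 2 * numRadius S * numRadius T := by ring
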